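/- For odd m ≥ 7 with m = 2n+1, the ratio of (2n+1)!!·(n−2)/n to c_n·c_{n+1} (where c_n is the n-th Catalan number) is at least (√(m−1)/(4√e))^m. -/

import Mathlib

open Nat

-- auxiliary: (2n)‼ ≤ (2n+1)‼
lemma df_even_le_odd : ∀ n : ℕ, (2*n)‼ ≤ (2*n+1)‼
  | 0 => le_refl 1
  | n + 1 => by
    rw [show 2*(n+1) = 2*n+2 from by ring, show 2*n+2+1 = (2*n+1)+2 from by ring, doubleFactorial_add_two, doubleFactorial_add_two]
    exact Nat.mul_le_mul (by omega) (df_even_le_odd n)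

-- (2n+1)! ≤ ((2n+1)‼)^2
lemma fact_le_df_sq (n : ℕ) : (2*n+1)! ≤ ((2*n+1)‼)^2 := by
  have := Nat.factorial_eq_mul_doubleFactorial (2*n)
  rw [this, sq]
  exact Nat.mul_le_mul_left _ (df_even_le_odd n)

-- k^k ≤ e^k * k!
lemma pow_le_exp_mul_factorial : ∀ k : ℕ, (k:ℝ)^k ≤ (Real.exp 1)^k * (k ! : ℝ)
  | 0 => by norm_num
  | k + 1 => by
    have ih := pow_le_exp_mul_factorial k
    have hstep : ((k:ℝ)+1)^k ≤ Real.exp 1 * (k:ℝ)^k := by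
      rcases Nat.eq_zero_or_pos k with rfl | hk
      · simp only [pow_zero, Nat.cast_zero]; simpa using Real.one_le_exp zero_le_one
      · have hkR : (0:ℝ) < k := by exact_mod_cast hk
        have h1 : (k:ℝ) + 1 ≤ (k:ℝ) * Real.exp (1/(k:ℝ)) := by
          have := Real.add_one_le_exp (1/(k:ℝ))
          calc (k:ℝ) + 1 = (k:ℝ) * (1/(k:ℝ) + 1) := by field_simp; ring
            _ ≤ (k:ℝ) * Real.exp (1/(k:ℝ)) := by
                exact mul_le_mul_of_nonneg_left (by linarith) hkR.le
        calc ((k:ℝ)+1)^k ≤ ((k:ℝ) * Real.exp (1/(k:ℝ)))^k := by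
              exact pow_le_pow_left₀ (by positivity) h1 k
          _ = (k:ℝ)^k * Real.exp (1/(k:ℝ))^k := mul_pow _ _ _
          _ = Real.exp 1 * (k:ℝ)^k := by
              rw [← Real.exp_nat_mul]
              have : (k:ℝ) * (1/(k:ℝ)) = 1 := by field_simp
              rw [this, mul_comm]
    push_cast [Nat.factorial_succ]
    calc ((k:ℝ)+1)^(k+1) = ((k:ℝ)+1) * ((k:ℝ)+1)^k := by ring
      _ ≤ ((k:ℝ)+1) * (Real.exp 1 * (k:ℝ)^k) := by
          exact mul_le_mul_of_nonneg_left hstep (by positivity)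
      _ ≤ ((k:ℝ)+1) * (Real.exp 1 * ((Real.exp 1)^k * (k ! : ℝ))) := by
          have : Real.exp 1 * (k:ℝ)^k ≤ Real.exp 1 * ((Real.exp 1)^k * (k ! : ℝ)) :=
            mul_le_mul_of_nonneg_left ih (Real.exp_pos 1).le
          exact mul_le_mul_of_nonneg_left this (by positivity)
      _ = (Real.exp 1)^(k+1) * (((k:ℝ)+1) * (k ! : ℝ)) := by ring
open Nat in
theorem lodgepole_bicaterpillar_ratio_bound :
    ∀ m n : ℕ, Odd m → 7 ≤ m → m = 2 * n + 1 →
      (Real.sqrt ((m : ℝ) - 1) / (4 * Real.sqrt (Real.exp 1))) ^ m ≤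
        (((2 * n + 1)‼ : ℝ) * ((n : ℝ) - 2) / (n : ℝ)) /
          (((Nat.choose (2 * n) n : ℝ) / ((n : ℝ) + 1)) *
            ((Nat.choose (2 * (n + 1)) (n + 1) : ℝ) / ((n : ℝ) + 2))) := by
  intro m n _ hm7 hmn
  subst hmn
  have hn3 : 3 ≤ n := by omega
  set E : ℝ := Real.exp 1 with hEdef
  have hE : 0 < E := Real.exp_pos 1
  set a : ℝ := (n : ℝ) with hadef
  have ha : (3:ℝ) ≤ a := by rw [hadef]; exact_mod_cast hn3
  have hcast : ((2*n+1 : ℕ):ℝ) - 1 = 2*a := by push_cast; ring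
  rw [hcast]
  set df : ℝ := (((2*n+1)‼ : ℕ) : ℝ) with hdfdef
  have hdf : 0 < df := by rw [hdfdef]; exact_mod_cast Nat.doubleFactorial_pos (2*n+1)
  set C1 : ℝ := (Nat.choose (2*n) n : ℝ) with hC1def
  set C2 : ℝ := (Nat.choose (2*(n+1)) (n+1) : ℝ) with hC2def
  have hC1pos : 0 < C1 := by
    rw [hC1def]; exact_mod_cast Nat.choose_pos (show n ≤ 2*n by omega)
  have hC2pos : 0 < C2 := by
    rw [hC2def]; exact_mod_cast Nat.choose_pos (show n+1 ≤ 2*(n+1) by omega)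
  set N : ℝ := df * (a - 2) / a with hNdef
  set D : ℝ := C1/(a+1) * (C2/(a+2)) with hDdef
  have hN : 0 ≤ N := by
    apply div_nonneg (mul_nonneg hdf.le (by linarith)) (by linarith)
  have hD : 0 < D := by
    apply mul_pos (_root_.div_pos hC1pos (by linarith)) (_root_.div_pos hC2pos (by linarith))
  -- bounds on binomials
  have hC1b : C1 ≤ 4^n := by
    have h1 : Nat.choose (2*n) n ≤ Nat.choose (2*n+1) n := Nat.choose_le_choose n (by omega)
    have h2 := Nat.choose_middle_le_pow n
    rw [hC1def]; exact_mod_cast h1.trans h2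
  have hC2b : C2 ≤ 4^(n+1) := by
    have h1 : Nat.choose (2*(n+1)) (n+1) ≤ Nat.choose (2*(n+1)+1) (n+1) :=
      Nat.choose_le_choose (n+1) (by omega)
    have h2 := Nat.choose_middle_le_pow (n+1)
    rw [hC2def]; exact_mod_cast h1.trans h2
  -- double factorial bound
  have hdf2 : (2*a)^(2*n+1) ≤ E^(2*n+1) * df^2 := by
    have h1 := pow_le_exp_mul_factorial (2*n+1)
    have h2 : ((2*n+1)! : ℝ) ≤ df^2 := by rw [hdfdef]; exact_mod_cast fact_le_df_sq n
    have h3 : (2*a)^(2*n+1) ≤ ((2*n+1:ℕ):ℝ)^(2*n+1) := by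
      apply pow_le_pow_left₀ (by positivity)
      push_cast; linarith
    calc (2*a)^(2*n+1) ≤ ((2*n+1:ℕ):ℝ)^(2*n+1) := h3
      _ ≤ E^(2*n+1) * ((2*n+1)! : ℝ) := h1
      _ ≤ E^(2*n+1) * df^2 := by
          exact mul_le_mul_of_nonneg_left h2 (by positivity)
  set B : ℝ := (4:ℝ)^n/(a+1) * ((4:ℝ)^(n+1)/(a+2)) with hBdef
  have hB : 0 < B := by positivity
  have hDB : D ≤ B := by
    apply mul_le_mul
    · exact div_le_div_of_nonneg_right hC1b (by linarith)
    · exact div_le_div_of_nonneg_right hC2b (by linarith)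
    · positivity
    · positivity
  have h16 : ((4:ℝ)^n * 4^(n+1))^2 = 16^(2*n+1) := by
    rw [← pow_add, ← pow_mul, show (16:ℝ) = 4^2 by norm_num, ← pow_mul]
    congr 1; ring
  have hB2 : B^2 = 16^(2*n+1) / ((a+1)^2*(a+2)^2) := by
    have hBalt : B = (4^n*4^(n+1))/((a+1)*(a+2)) := by rw [hBdef, _root_.div_mul_div_comm]
    rw [hBalt, div_pow, h16, mul_pow]
  -- key squared inequality
  have key : (2*a/(16*E))^(2*n+1) * B^2 ≤ N^2 := by
    have expand : (2*a/(16*E))^(2*n+1) * B^2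
        = (2*a)^(2*n+1) / (E^(2*n+1) * ((a+1)^2*(a+2)^2)) := by
      rw [hB2, div_pow, mul_pow 16 E]
      field_simp
    rw [expand, hNdef, div_pow, div_le_div_iff₀ (by positivity) (by positivity)]
    have h2 : a^2 ≤ ((a-2)*(a+1)*(a+2))^2 := by
      apply pow_le_pow_left₀ (by linarith)
      nlinarith
    calc (2*a)^(2*n+1) * a^2 ≤ (E^(2*n+1) * df^2) * ((a-2)*(a+1)*(a+2))^2 :=
          mul_le_mul hdf2 h2 (by positivity) (by positivity)
      _ = (df*(a-2))^2 * (E^(2*n+1) * ((a+1)^2*(a+2)^2)) := by ring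
  have hXle : (2*a/(16*E))^(2*n+1) ≤ (N/D)^2 := by
    have step1 : (2*a/(16*E))^(2*n+1) ≤ N^2 / B^2 := by
      rw [le_div_iff₀ (by positivity)]
      exact key
    have step2 : N^2 / B^2 ≤ N^2 / D^2 := by
      apply div_le_div_of_nonneg_left (by positivity) (by positivity)
      exact pow_le_pow_left₀ hD.le hDB 2
    calc (2*a/(16*E))^(2*n+1) ≤ N^2/D^2 := step1.trans step2
      _ = (N/D)^2 := (div_pow N D 2).symm
  -- conclude by taking square roots
  have hL : (0:ℝ) ≤ Real.sqrt (2*a) / (4 * Real.sqrt E) := by positivity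
  have hND : (0:ℝ) ≤ N / D := div_nonneg hN hD.le
  have hsq : ((Real.sqrt (2*a) / (4 * Real.sqrt E)) ^ (2*n+1))^2
      = (2*a/(16*E))^(2*n+1) := by
    rw [← pow_mul, mul_comm (2*n+1) 2, pow_mul]
    congr 1
    rw [div_pow, mul_pow, Real.sq_sqrt (by positivity), Real.sq_sqrt hE.le]
    norm_num
  calc (Real.sqrt (2*a) / (4 * Real.sqrt E)) ^ (2*n+1)
      = Real.sqrt (((Real.sqrt (2*a) / (4 * Real.sqrt E)) ^ (2*n+1))^2) :=
        (Real.sqrt_sq (pow_nonneg hL _)).symm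
    _ ≤ Real.sqrt ((N/D)^2) := Real.sqrt_le_sqrt (by rw [hsq]; exact hXle)
    _ = N/D := Real.sqrt_sq hND
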